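/- Let V be a finite-dimensional real vector space, f : V → V a linear map, and δ₁, …, δ_m : V → ℝ linear functionals such that for each k there exist real numbers a_{ik} (1 ≤ i < k) with δ_k ∘ f = δ_k + Σ_{i<k} a_{ik} δ_i. Let Z = ker δ₁ ∩ … ∩ ker δ_m, which is f-invariant. Then Tr(f) = dim(V ⧸ Z) + Tr(f|_Z). -/

import Mathlib

open LinearMap Submodule

lemma trace_restrict_add_trace_mapQ_aux
    {V : Type*} [AddCommGroup V] [Module ℝ V] [FiniteDimensional ℝ V]
    (p : Submodule ℝ V) (f : V →ₗ[ℝ] V) (hf : ∀ x ∈ p, f x ∈ p) :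
    LinearMap.trace ℝ V f
      = LinearMap.trace ℝ p (f.restrict hf)
        + LinearMap.trace ℝ (V ⧸ p) (p.mapQ p f (fun x hx => hf x hx)) := by
  obtain ⟨q, hq⟩ := p.exists_isCompl
  set e := Submodule.prodEquivOfIsCompl p q hq with he
  set h : (p × q) →ₗ[ℝ] p × q := e.symm.conj f with hh
  have htr : LinearMap.trace ℝ V f = LinearMap.trace ℝ (p × q) h := by
    rw [hh, trace_conj']
  set A := (fst ℝ p q) ∘ₗ h ∘ₗ inl ℝ p q with hA
  set B := (fst ℝ p q) ∘ₗ h ∘ₗ inr ℝ p q with hB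
  set C := (snd ℝ p q) ∘ₗ h ∘ₗ inl ℝ p q with hC
  set D := (snd ℝ p q) ∘ₗ h ∘ₗ inr ℝ p q with hD
  have hdecomp : h = prodMap A D + (inl ℝ p q ∘ₗ B ∘ₗ snd ℝ p q)
      + (inr ℝ p q ∘ₗ C ∘ₗ fst ℝ p q) := by
    apply LinearMap.ext; rintro ⟨a, b⟩
    have h1 : h (a, b) = h (a, 0) + h (0, b) := by rw [← map_add]; simp
    refine Prod.ext ?_ ?_ <;>
      simp [h1, hA, hB, hC, hD, Prod.ext_iff] <;> abel
  have nilB : LinearMap.trace ℝ _ (inl ℝ p q ∘ₗ B ∘ₗ snd ℝ p q) = 0 := by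
    have : IsNilpotent (inl ℝ p q ∘ₗ B ∘ₗ snd ℝ p q) := by
      refine ⟨2, ?_⟩
      apply LinearMap.ext; rintro ⟨a, b⟩
      simp [pow_two, Module.End.mul_eq_comp]
    exact (isNilpotent_trace_of_isNilpotent this).eq_zero
  have nilC : LinearMap.trace ℝ _ (inr ℝ p q ∘ₗ C ∘ₗ fst ℝ p q) = 0 := by
    have : IsNilpotent (inr ℝ p q ∘ₗ C ∘ₗ fst ℝ p q) := by
      refine ⟨2, ?_⟩
      apply LinearMap.ext; rintro ⟨a, b⟩
      simp [pow_two, Module.End.mul_eq_comp]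
    exact (isNilpotent_trace_of_isNilpotent this).eq_zero
  have hAf : A = f.restrict hf := by
    apply LinearMap.ext; intro a
    have hmem : f ↑a ∈ p := hf a a.2
    apply Subtype.ext
    have : e.symm (f ↑a) = (⟨f ↑a, hmem⟩, 0) :=
      Submodule.prodEquivOfIsCompl_symm_apply_left (p := p) (q := q) hq ⟨f ↑a, hmem⟩
    have hea : e ((a, 0) : p × q) = (a : V) := by simp [he]
    simp [hA, hh, LinearEquiv.conj_apply, hea, this, LinearMap.restrict_apply]
  have hDq : p.mapQ p f (fun x hx => hf x hx)
      = (Submodule.quotientEquivOfIsCompl p q hq).symm.conj D := by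
    apply LinearMap.ext; intro z
    obtain ⟨y, rfl⟩ : ∃ y : q, (Submodule.Quotient.mk (y : V) : V ⧸ p) = z :=
      ⟨_, Submodule.mk_quotientEquivOfIsCompl_apply (p := p) (q := q) hq z⟩
    simp only [LinearEquiv.conj_apply, LinearEquiv.symm_symm, coe_comp,
      Function.comp_apply, LinearEquiv.coe_coe,
      Submodule.quotientEquivOfIsCompl_apply_mk_coe,
      Submodule.mapQ_apply, Submodule.quotientEquivOfIsCompl_symm_apply]
    rw [Submodule.Quotient.eq]
    have hey : e ((0, y) : p × q) = (y : V) := by simp [he]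
    have hDy : (D y : V) = ↑((e.symm (f ↑y)).2) := by
      simp [hD, hh, LinearEquiv.conj_apply, hey]
    have key : ∀ v : V, v - ↑((e.symm v).2) ∈ p := by
      intro v
      obtain ⟨u, rfl⟩ : ∃ u : p × q, e u = v := ⟨e.symm v, e.apply_symm_apply v⟩
      simpa [he] using u.1.2
    rw [hDy]
    exact key (f ↑y)
  rw [htr, hdecomp, map_add, map_add, nilB, nilC, add_zero, add_zero,
    trace_prodMap', hAf, hDq, trace_conj']


/-- Under the triangular relations `δ_k ∘ f = δ_k + Σ_{i<k} a_{ik} δ_i`, the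
subspace `Z = ker δ₁ ∩ … ∩ ker δ_m` is `f`-invariant and
`Tr(f) = dim(V ⧸ Z) + Tr(f|_Z)`. -/
theorem trace_eq_finrank_quotient_add_trace_restrict
    {V : Type*} [AddCommGroup V] [Module ℝ V] [FiniteDimensional ℝ V]
    (f : V →ₗ[ℝ] V) {m : ℕ} (δ : Fin m → V →ₗ[ℝ] ℝ)
    (htri : ∀ k : Fin m, ∃ a : Fin m → ℝ,
      (δ k).comp f = δ k + ∑ i ∈ Finset.univ.filter (fun i => i < k), a i • δ i)
    (hZ : ∀ x ∈ ⨅ i : Fin m, LinearMap.ker (δ i),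
      f x ∈ ⨅ i : Fin m, LinearMap.ker (δ i)) :
    LinearMap.trace ℝ V f
      = (Module.finrank ℝ (V ⧸ ⨅ i : Fin m, LinearMap.ker (δ i)) : ℝ)
        + LinearMap.trace ℝ (⨅ i : Fin m, LinearMap.ker (δ i) : Submodule ℝ V)
            (f.restrict hZ) := by
  set Z : Submodule ℝ V := ⨅ i : Fin m, LinearMap.ker (δ i) with hZdef
  have hmain := trace_restrict_add_trace_mapQ_aux Z f hZ
  rw [hmain]
  -- It remains to show the trace of the quotient map is finrank.
  set fbar := Z.mapQ Z f (fun x hx => hZ x hx) with hfbar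
  -- the descending chain
  set P : ℕ → Submodule ℝ V := fun k => ⨅ i : Fin m, ⨅ _ : (i : ℕ) < k, LinearMap.ker (δ i)
    with hP
  set g : V →ₗ[ℝ] V := f - LinearMap.id with hg
  have hstep : ∀ (k : ℕ), ∀ x ∈ P k, g x ∈ P (k + 1) := by
    intro k x hx
    simp only [hP, Submodule.mem_iInf, LinearMap.mem_ker] at hx ⊢
    intro j hj
    obtain ⟨a, ha⟩ := htri j
    have h1 : δ j (f x) = δ j x + ∑ i ∈ Finset.univ.filter (fun i => i < j), a i * δ i x := by
      have := LinearMap.congr_fun ha x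
      simpa using this
    have h2 : ∀ i ∈ Finset.univ.filter (fun i => i < j), a i * δ i x = 0 := by
      intro i hi
      rw [Finset.mem_filter] at hi
      have : (i : ℕ) < k := lt_of_lt_of_le hi.2 (Nat.lt_succ_iff.mp hj)
      rw [hx i this, mul_zero]
    simp only [hg, LinearMap.sub_apply, LinearMap.id_apply, map_sub]
    rw [h1, Finset.sum_eq_zero h2, add_zero, sub_self]
  have hgpow : ∀ (k : ℕ) (x : V), (g ^ k) x ∈ P k := by
    intro k
    induction k with
    | zero => intro x; simp [hP]
    | succ n ih =>
      intro x
      rw [pow_succ', Module.End.mul_apply]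
      exact hstep n _ (ih x)
  have hPZ : P m ≤ Z := by
    intro x hx
    simp only [hP, Submodule.mem_iInf] at hx
    rw [hZdef, Submodule.mem_iInf]
    exact fun i => hx i i.isLt
  -- nilpotency of fbar - 1
  have hcomm : ∀ x : V, (fbar - 1) (Submodule.Quotient.mk x) = Submodule.Quotient.mk (g x) := by
    intro x
    simp [hfbar, hg, Submodule.mapQ_apply, Submodule.Quotient.mk_sub]
  have hpowcomm : ∀ (k : ℕ) (x : V),
      ((fbar - 1) ^ k) (Submodule.Quotient.mk x) = Submodule.Quotient.mk ((g ^ k) x) := by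
    intro k
    induction k with
    | zero => intro x; simp
    | succ n ih =>
      intro x
      rw [pow_succ', pow_succ', Module.End.mul_apply, Module.End.mul_apply, ih, hcomm]
  have hnil : IsNilpotent (fbar - 1) := by
    refine ⟨m, ?_⟩
    apply LinearMap.ext
    intro z
    obtain ⟨x, rfl⟩ := Submodule.Quotient.mk_surjective Z z
    rw [hpowcomm m x]
    simpa [Submodule.Quotient.mk_eq_zero] using hPZ (hgpow m x)
  have htrnil : LinearMap.trace ℝ (V ⧸ Z) (fbar - 1) = 0 :=
    (LinearMap.isNilpotent_trace_of_isNilpotent hnil).eq_zero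
  have : LinearMap.trace ℝ (V ⧸ Z) fbar
      = (Module.finrank ℝ (V ⧸ Z) : ℝ) := by
    have h1 : fbar = (fbar - 1) + 1 := by rw [sub_add_cancel]
    rw [h1, map_add, htrnil, zero_add, LinearMap.trace_one]
  rw [this]
  ring
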